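/- arXiv:1105.2143 — 9 statements merged into one kernel-verified Lean document; each statement's English description precedes it below -/
import Mathlib

section
/- For all natural numbers m and elements α, y of a field, and every integer s ≥ 1, the sum ∑_{i=0}^m C(m,i) y^i α^{m-i} i^s equals (α+y)^m times ∑_{k=0}^s S(s,k) (y/(α+y))^k · m^{\underline{k}}, where S(s,k) are Stirling numbers of the second kind and m^{\underline{k}} is the falling factorial, provided α+y ≠ 0. -/
/-- Stirling numbers of the second kind. -/
def stirling2 : ℕ → ℕ → ℕ
  | 0, 0 => 1
  | 0, _ + 1 => 0
  | _ + 1, 0 => 0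
  | n + 1, k + 1 => (k + 1) * stirling2 n (k + 1) + stirling2 n k

lemma stirling2_eq_zero : ∀ s k : ℕ, s < k → stirling2 s k = 0
  | 0, _ + 1, _ => rfl
  | n + 1, k + 1, h => by
    have h' : n < k + 1 := by omega
    have h'' : n < k := by omega
    simp [stirling2, stirling2_eq_zero n (k+1) h', stirling2_eq_zero n k h'']

lemma mul_descFactorial (i k : ℕ) :
    i * i.descFactorial k = i.descFactorial (k + 1) + k * i.descFactorial k := by
  rcases le_or_gt k i with h | h
  · rw [Nat.descFactorial_succ, ← Nat.add_mul, Nat.sub_add_cancel h]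
  · rw [Nat.descFactorial_eq_zero_iff_lt.2 h,
      Nat.descFactorial_eq_zero_iff_lt.2 (by omega)]
    simp

lemma pow_eq_sum_stirling (s i : ℕ) :
    i ^ s = ∑ k ∈ Finset.range (s + 1), stirling2 s k * i.descFactorial k := by
  induction s with
  | zero => simp [stirling2]
  | succ s ih =>
    have key : ∑ k ∈ Finset.range (s + 2), stirling2 (s+1) k * i.descFactorial k
        = ∑ k ∈ Finset.range (s + 1), stirling2 s k * i.descFactorial (k+1)
          + ∑ k ∈ Finset.range (s + 1), stirling2 s k * (k * i.descFactorial k) := by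
      rw [Finset.sum_range_succ' _ (s+1)]
      have h0 : stirling2 (s+1) 0 * i.descFactorial 0 = 0 := by simp [stirling2]
      rw [h0, add_zero]
      have hterm : ∀ k, stirling2 (s+1) (k+1) * i.descFactorial (k+1)
          = stirling2 s (k+1) * ((k+1) * i.descFactorial (k+1))
            + stirling2 s k * i.descFactorial (k+1) := by
        intro k; simp [stirling2]; ring
      rw [Finset.sum_congr rfl fun k _ => hterm k, Finset.sum_add_distrib, add_comm]
      congr 1
      have h' := Finset.sum_range_succ' (fun k => stirling2 s k * (k * i.descFactorial k)) (s+1)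
      rw [Finset.sum_range_succ _ (s+1), stirling2_eq_zero s (s+1) (by omega)] at h'
      simpa using h'.symm
    rw [key, pow_succ, ih, Finset.sum_mul, ← Finset.sum_add_distrib]
    apply Finset.sum_congr rfl
    intro k _
    calc stirling2 s k * i.descFactorial k * i
        = stirling2 s k * (i * i.descFactorial k) := by ring
      _ = _ := by rw [mul_descFactorial]; ring

lemma binom_sum_descFactorial {F : Type*} [Field F] (α y : F) (m k : ℕ) :
    ∑ i ∈ Finset.range (m + 1), (m.choose i : F) * y ^ i * α ^ (m - i) * (i.descFactorial k : F)
      = (m.descFactorial k : F) * y ^ k * (α + y) ^ (m - k) := by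
  rcases le_or_gt k m with h | h
  · rw [Finset.range_eq_Ico, ← Finset.sum_Ico_consecutive _ (Nat.zero_le k) (by omega : k ≤ m + 1)]
    have h1 : ∑ i ∈ Finset.Ico 0 k,
        (m.choose i : F) * y ^ i * α ^ (m - i) * (i.descFactorial k : F) = 0 := by
      apply Finset.sum_eq_zero
      intro i hi
      simp only [Finset.mem_Ico] at hi
      rw [Nat.descFactorial_eq_zero_iff_lt.2 hi.2]
      simp
    rw [h1, zero_add, Finset.sum_Ico_eq_sum_range]
    have h2 : m + 1 - k = (m - k) + 1 := by omega
    rw [h2]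
    have h3 : ∀ j ∈ Finset.range (m - k + 1),
        ((m.choose (k + j) : F) * y ^ (k + j) * α ^ (m - (k + j)) * ((k + j).descFactorial k : F))
          = (m.descFactorial k : F) * y ^ k * (y ^ j * α ^ (m - k - j) * ((m - k).choose j : F)) := by
      intro j hj
      simp only [Finset.mem_range] at hj
      have hkj : k + j ≤ m := by omega
      have hc : m.choose (k + j) * (k + j).choose k = m.choose k * (m - k).choose j := by
        have := Nat.choose_mul (n := m) (Nat.le_add_right k j)
        simpa using this
      have hd : (k + j).descFactorial k = k.factorial * (k + j).choose k :=
        Nat.descFactorial_eq_factorial_mul_choose _ _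
      have hdm : m.descFactorial k = k.factorial * m.choose k :=
        Nat.descFactorial_eq_factorial_mul_choose _ _
      have hsub : m - (k + j) = m - k - j := by omega
      rw [hd, hdm, hsub, pow_add]
      push_cast
      rw [show ((m.choose (k+j) : F)) * (y^k * y^j) * α^(m-k-j) * ((k.factorial : F) * ((k+j).choose k : F))
          = ((m.choose (k+j) : F) * ((k+j).choose k : F)) * (k.factorial : F) * y^k * (y^j * α^(m-k-j)) by ring]
      rw [show ((m.choose (k+j) : F) * ((k+j).choose k : F)) = ((m.choose k : F) * ((m-k).choose j : F)) by
        exact_mod_cast congrArg (Nat.cast : ℕ → F) hc]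
      ring
    have hap : (α + y) ^ (m - k) = ∑ j ∈ Finset.range (m - k + 1),
        y ^ j * α ^ (m - k - j) * ((m - k).choose j : F) := by
      rw [add_comm α y, Commute.add_pow (Commute.all y α)]
    rw [Finset.sum_congr rfl h3, ← Finset.mul_sum, ← hap]
  · have h1 : ∑ i ∈ Finset.range (m + 1),
        (m.choose i : F) * y ^ i * α ^ (m - i) * (i.descFactorial k : F) = 0 := by
      apply Finset.sum_eq_zero
      intro i hi
      simp only [Finset.mem_range] at hi
      rw [Nat.descFactorial_eq_zero_iff_lt.2 (by omega)]
      simp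
    rw [h1, Nat.descFactorial_eq_zero_iff_lt.2 h]
    simp

theorem stmt0 {F : Type*} [Field F] (α y : F) (hαy : α + y ≠ 0)
    (m s : ℕ) (hs : 1 ≤ s) :
    ∑ i ∈ Finset.range (m + 1), (m.choose i : F) * y ^ i * α ^ (m - i) * (i : F) ^ s =
      (α + y) ^ m *
        ∑ k ∈ Finset.range (s + 1),
          (stirling2 s k : F) * (y / (α + y)) ^ k * (m.descFactorial k : F) := by
  have lhs_eq : ∀ i : ℕ, ((i : F)) ^ s
      = ∑ k ∈ Finset.range (s + 1), (stirling2 s k : F) * (i.descFactorial k : F) := by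
    intro i
    have := pow_eq_sum_stirling s i
    have := congrArg (Nat.cast : ℕ → F) this
    push_cast at this
    exact this
  calc ∑ i ∈ Finset.range (m + 1), (m.choose i : F) * y ^ i * α ^ (m - i) * (i : F) ^ s
      = ∑ k ∈ Finset.range (s + 1), (stirling2 s k : F) *
          ∑ i ∈ Finset.range (m + 1),
            (m.choose i : F) * y ^ i * α ^ (m - i) * (i.descFactorial k : F) := by
        simp_rw [lhs_eq, Finset.mul_sum]
        rw [Finset.sum_comm]
        apply Finset.sum_congr rfl
        intro k _
        apply Finset.sum_congr rfl
        intro i _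
        ring
    _ = (α + y) ^ m * ∑ k ∈ Finset.range (s + 1),
          (stirling2 s k : F) * (y / (α + y)) ^ k * (m.descFactorial k : F) := by
        rw [Finset.mul_sum]
        apply Finset.sum_congr rfl
        intro k _
        rw [binom_sum_descFactorial]
        rcases le_or_gt k m with h | h
        · rw [div_pow]
          have hne : (α + y) ^ k ≠ 0 := pow_ne_zero _ hαy
          field_simp
          rw [show (α + y) ^ m = (α + y) ^ (m - k) * (α + y) ^ k by
            rw [← pow_add, Nat.sub_add_cancel h]]
          ring
        · rw [Nat.descFactorial_eq_zero_iff_lt.2 h]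
          simp
end

section
/- If P is a polynomial of degree at most r over a field F, α, y ∈ F with y ≠ 0 and α + y ≠ 0, then for every natural number m, ∑_{i=0}^m C(m,i) y^i α^{m-i} P(i) = (α+y)^m Q(m) for some polynomial Q over F of degree at most r (depending on P, α, y but not on m). -/
open Polynomial Finset

theorem stmt2 {F : Type*} [Field F] (r : ℕ) (P : Polynomial F) (hP : P.natDegree ≤ r)
    (α y : F) (hy : y ≠ 0) (hαy : α + y ≠ 0) :
    ∃ Q : Polynomial F, Q.natDegree ≤ r ∧
      ∀ m : ℕ, ∑ i ∈ Finset.range (m + 1),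
          (m.choose i : F) * y ^ i * α ^ (m - i) * P.eval (i : F) =
        (α + y) ^ m * Q.eval (m : F) := by
  induction r generalizing P with
  | zero =>
    obtain ⟨c, rfl⟩ := Polynomial.natDegree_eq_zero.mp (Nat.le_zero.mp hP)
    refine ⟨Polynomial.C c, by simp, fun m => ?_⟩
    simp only [Polynomial.eval_C]
    rw [← Finset.sum_mul]
    congr 1
    rw [add_comm α y, add_pow]
    apply Finset.sum_congr rfl
    intro i _
    ring
  | succ r IH =>
    set c := P.coeff 0 with hc
    set D := P.divX with hD
    have hDdeg : D.natDegree ≤ r := by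
      rw [hD, Polynomial.natDegree_divX_eq_natDegree_tsub_one]
      omega
    set E := D.comp (Polynomial.X + 1) with hE
    have hEdeg : E.natDegree ≤ r := by
      calc E.natDegree ≤ D.natDegree * (Polynomial.X + 1 : Polynomial F).natDegree :=
            Polynomial.natDegree_comp_le
        _ ≤ r * 1 := by
            apply Nat.mul_le_mul hDdeg
            calc (Polynomial.X + 1 : Polynomial F).natDegree
                ≤ max (Polynomial.X : Polynomial F).natDegree
                    (1 : Polynomial F).natDegree := Polynomial.natDegree_add_le _ _
              _ ≤ 1 := by simp
        _ = r := mul_one r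
    obtain ⟨Q', hQ'deg, hQ'⟩ := IH E hEdeg
    refine ⟨Polynomial.C c + Polynomial.C (y / (α + y)) * Polynomial.X *
        (Q'.comp (Polynomial.X - 1)), ?_, ?_⟩
    · apply le_trans (Polynomial.natDegree_add_le _ _)
      simp only [Polynomial.natDegree_C, max_le_iff]
      constructor
      · omega
      · calc (Polynomial.C (y / (α + y)) * Polynomial.X *
              (Q'.comp (Polynomial.X - 1))).natDegree
            ≤ (Polynomial.C (y / (α + y)) * Polynomial.X).natDegree +
              (Q'.comp (Polynomial.X - 1)).natDegree := Polynomial.natDegree_mul_le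
          _ ≤ 1 + r := by
              apply Nat.add_le_add
              · apply le_trans Polynomial.natDegree_mul_le; simp
              · calc (Q'.comp (Polynomial.X - 1)).natDegree
                    ≤ Q'.natDegree * (Polynomial.X - 1 : Polynomial F).natDegree :=
                      Polynomial.natDegree_comp_le
                  _ ≤ r * 1 := by
                      apply Nat.mul_le_mul hQ'deg
                      calc (Polynomial.X - 1 : Polynomial F).natDegree
                          = (Polynomial.X - Polynomial.C 1 : Polynomial F).natDegree := by
                            rw [Polynomial.C_1]
                        _ ≤ 1 := Polynomial.natDegree_X_sub_C_le 1
                  _ = r := mul_one r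
          _ = r + 1 := by omega
    · intro m
      have hPeval : ∀ x : F, P.eval x = D.eval x * x + c := by
        intro x
        conv_lhs => rw [← Polynomial.divX_mul_X_add P]
        simp [hD, hc]
      have hEeval : ∀ x : F, E.eval x = D.eval (x + 1) := by
        intro x; simp [hE]
      have hsplit : ∑ i ∈ Finset.range (m + 1),
          (m.choose i : F) * y ^ i * α ^ (m - i) * P.eval (i : F)
          = (∑ i ∈ Finset.range (m + 1),
              (m.choose i : F) * y ^ i * α ^ (m - i) * (D.eval (i : F) * (i : F)))
            + c * (α + y) ^ m := by
        rw [add_comm α y, add_pow]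
        rw [Finset.mul_sum, ← Finset.sum_add_distrib]
        apply Finset.sum_congr rfl
        intro i _
        rw [hPeval]
        ring
      rw [hsplit]
      have hQeval : (Polynomial.C c + Polynomial.C (y / (α + y)) * Polynomial.X *
          (Q'.comp (Polynomial.X - 1))).eval (m : F)
          = c + (y / (α + y)) * m * Q'.eval ((m : F) - 1) := by
        simp [Polynomial.eval_comp]
      rw [hQeval]
      cases m with
      | zero => simp
      | succ n =>
        have hT : (∑ i ∈ Finset.range (n + 1 + 1),
            ((n+1).choose i : F) * y ^ i * α ^ (n + 1 - i) * (D.eval (i : F) * (i : F)))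
            = y * (n + 1) * ((α + y) ^ n * Q'.eval (n : F)) := by
          rw [Finset.sum_range_succ']
          simp only [Nat.cast_zero, mul_zero, add_zero]
          rw [← hQ' n, Finset.mul_sum]
          apply Finset.sum_congr rfl
          intro j hj
          have hch : (((n+1).choose (j+1) : ℕ) : F) * ((j : F) + 1)
              = ((n : F) + 1) * ((n.choose j : ℕ) : F) := by
            have h2 : ((n+1) * n.choose j : ℕ) = ((n+1).choose (j+1) * (j+1) : ℕ) :=
              Nat.add_one_mul_choose_eq n j
            have h3 : (((n+1) * n.choose j : ℕ) : F)
                = (((n+1).choose (j+1) * (j+1) : ℕ) : F) := by rw [h2]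
            push_cast at h3
            exact h3.symm
          rw [hEeval]
          have hsub : n + 1 - (j + 1) = n - j := by omega
          rw [hsub]
          push_cast
          linear_combination (y ^ (j + 1) * α ^ (n - j) * Polynomial.eval ((j : F) + 1) D) * hch
        rw [hT]
        have hd : (α + y) ^ (n + 1) * (y / (α + y)) = y * (α + y) ^ n := by
          field_simp
          ring
        push_cast
        have : ((n:F) + 1) - 1 = (n : F) := by ring
        rw [this]
        field_simp
        ring
end

section
/- Let a be a sequence over a commutative ring R with ordinary generating function A(t) = u(t)/f^R(t), where f(t) = t^r − ∑_{i=1}^r h_i t^{r-i} is its characteristic polynomial, f^R(t) = 1 − ∑_{i=1}^r h_i t^i its reflected polynomial, and u(t) of degree < r determined by the initial conditions. Then the sequence b defined by the generating function B(t) = A(t)/(1 − x t A(t)) satisfies a linear recurrence with characteristic polynomial (f^R(t) − x t u(t))^R, namely t^r − (h_1 + x u_0) t^{r-1} − ⋯ − (h_r + x u_{r-1}). -/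
open PowerSeries Finset

lemma coeff_aux {R : Type*} [CommRing R] (r : ℕ) (g c : ℕ → R) (n : ℕ) :
    PowerSeries.coeff n
      ((1 - ∑ i ∈ Finset.range r, PowerSeries.C (g i) * PowerSeries.X ^ (i + 1)) *
        PowerSeries.mk c)
      = c n - ∑ i ∈ Finset.range (min r n), g i * c (n - 1 - i) := by
  rw [sub_mul, one_mul, map_sub, PowerSeries.coeff_mk, Finset.sum_mul, map_sum]
  congr 1
  have key : ∀ i, PowerSeries.coeff n (PowerSeries.C (g i) * PowerSeries.X ^ (i + 1)
      * PowerSeries.mk c)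
      = if i + 1 ≤ n then g i * c (n - 1 - i) else 0 := by
    intro i
    rw [mul_assoc, PowerSeries.coeff_C_mul, PowerSeries.coeff_X_pow_mul', PowerSeries.coeff_mk]
    split_ifs with hc
    · congr 2
      omega
    · simp
  simp only [key]
  rw [← Finset.sum_filter]
  congr 1
  ext i
  simp only [Finset.mem_filter, Finset.mem_range, lt_min_iff]
  omega

theorem stmt5 {R : Type*} [CommRing R] (r : ℕ) (hr : 1 ≤ r) (x : R)
    (a b u h : ℕ → R)
    (hu0 : u 0 = a 0)
    (hui : ∀ i, 1 ≤ i → i < r →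
      u i = a i - ∑ j ∈ Finset.range i, h (j + 1) * a (i - 1 - j))
    (ha : ∀ n, a (n + r) = ∑ i ∈ Finset.range r, h (i + 1) * a (n + r - 1 - i))
    (hb : PowerSeries.mk b * (1 - PowerSeries.C x * PowerSeries.X * PowerSeries.mk a)
        = PowerSeries.mk a) :
    ∀ n, b (n + r) = ∑ i ∈ Finset.range r, (h (i + 1) + x * u i) * b (n + r - 1 - i) := by
  set F : PowerSeries R :=
    1 - ∑ i ∈ Finset.range r, PowerSeries.C (h (i + 1)) * PowerSeries.X ^ (i + 1) with hF
  set U : PowerSeries R :=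
    ∑ i ∈ Finset.range r, PowerSeries.C (u i) * PowerSeries.X ^ i with hU
  have hcoeffU : ∀ n, PowerSeries.coeff n U = if n < r then u n else 0 := by
    intro n
    rw [hU, map_sum]
    simp only [PowerSeries.coeff_C_mul, PowerSeries.coeff_X_pow, mul_ite, mul_one, mul_zero]
    rw [Finset.sum_ite_eq (Finset.range r) n u]
    simp [Finset.mem_range]
  have hFA : F * PowerSeries.mk a = U := by
    ext n
    rw [hF, coeff_aux, hcoeffU]
    rcases Nat.lt_or_ge n r with hn | hn
    · rw [if_pos hn, min_eq_right hn.le]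
      rcases Nat.eq_zero_or_pos n with rfl | hn1
      · simp [hu0]
      · rw [hui n hn1 hn]
    · rw [if_neg (by omega), min_eq_left hn]
      obtain ⟨m, rfl⟩ := Nat.exists_eq_add_of_le hn
      rw [add_comm r m, ha m]
      ring
  have hkey : PowerSeries.mk b * (F - PowerSeries.C x * PowerSeries.X * U) = U := by
    linear_combination F * hb + (PowerSeries.C x * PowerSeries.X * PowerSeries.mk b + 1) * hFA
  have hG : F - PowerSeries.C x * PowerSeries.X * U
      = 1 - ∑ i ∈ Finset.range r, PowerSeries.C (h (i + 1) + x * u i)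
          * PowerSeries.X ^ (i + 1) := by
    rw [hF, hU, Finset.mul_sum, sub_sub, ← Finset.sum_add_distrib]
    congr 1
    apply Finset.sum_congr rfl
    intro i _
    rw [map_add, map_mul, pow_succ]
    ring
  intro n
  have := congrArg (PowerSeries.coeff (n + r)) hkey
  rw [hG, mul_comm, coeff_aux, hcoeffU, if_neg (by omega),
    min_eq_left (by omega), sub_eq_zero] at this
  exact this
end

section
/- The operators L^{(y)} and I^{(x)} commute: for every sequence a over a commutative ring R and all x, y ∈ R, I^{(x)}(L^{(y)}(a)) = L^{(y)}(I^{(x)}(a)). -/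
open Finset

lemma vand (l : ℕ) : ∀ (m k : ℕ),
    ∑ j ∈ range (m + 1), (j.choose l) * ((m - j).choose k) = (m + 1).choose (k + l + 1) := by
  intro m
  induction m with
  | zero =>
    intro k
    cases l <;> cases k <;> simp [Nat.choose]
  | succ m ih =>
    intro k
    rw [Finset.sum_range_succ]
    cases k with
    | zero =>
      have h := ih 0
      simp only [Nat.choose_zero_right, mul_one, Nat.zero_add] at h ⊢
      rw [h, Nat.choose_succ_succ' (m + 1) l, Nat.add_comm]
    | succ k =>
      have hstep : ∀ j ∈ range (m + 1),
          j.choose l * ((m + 1 - j).choose (k + 1))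
            = j.choose l * ((m - j).choose k) + j.choose l * ((m - j).choose (k + 1)) := by
        intro j hj
        rw [mem_range] at hj
        have : m + 1 - j = (m - j) + 1 := by omega
        rw [this, Nat.choose_succ_succ, Nat.mul_add]
      rw [Finset.sum_congr rfl hstep, Finset.sum_add_distrib, ih k, ih (k + 1)]
      have h1 : k + 1 + l + 1 = (k + l + 1) + 1 := by omega
      rw [h1, Nat.choose_succ_succ (m + 1) (k + l + 1)]
      simp [Nat.choose]

lemma tri {R : Type*} [AddCommMonoid R] (n : ℕ) (g : ℕ → ℕ → R) :
    ∑ i ∈ range n, ∑ j ∈ range (i + 1), g i j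
      = ∑ j ∈ range n, ∑ k ∈ range (n - j), g (k + j) j := by
  rw [Finset.sum_sigma', Finset.sum_sigma']
  apply Finset.sum_nbij' (fun p => (⟨p.2, p.1 - p.2⟩ : Σ _ : ℕ, ℕ))
    (fun q => (⟨q.2 + q.1, q.1⟩ : Σ _ : ℕ, ℕ))
  · intro p hp
    simp only [mem_sigma, mem_range] at hp ⊢
    omega
  · intro q hq
    simp only [mem_sigma, mem_range] at hq ⊢
    omega
  · intro p hp
    simp only [mem_sigma, mem_range] at hp
    ext <;> simp <;> omega
  · intro q hq
    simp only [mem_sigma, mem_range] at hq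
    ext <;> simp <;> omega
  · intro p hp
    simp only [mem_sigma, mem_range] at hp
    simp only []
    congr 1 <;> omega

lemma keylem {R : Type*} [CommRing R] (x y : R) (a b c : ℕ → R)
    (hb0 : b 0 = a 0)
    (hbn : ∀ n, 1 ≤ n → b n = a n + x * ∑ j ∈ Finset.range n, a (n - 1 - j) * b j)
    (hc : ∀ n, c n = ∑ i ∈ Finset.range (n + 1), (n.choose i : R) * y ^ (n - i) * a i)
    (n : ℕ) :
    ∑ i ∈ Finset.range (n + 2), ((n + 1).choose i : R) * y ^ (n + 1 - i) * b i
      = c (n + 1) + x * ∑ j ∈ Finset.range (n + 1),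
          c (n - j) * ∑ i ∈ Finset.range (j + 1), (j.choose i : R) * y ^ (j - i) * b i := by
  -- the common rectangular form
  set W : R := ∑ k ∈ range (n + 1), ∑ l ∈ range (n + 1),
      ((n + 1).choose (k + l + 1) : R) * (y ^ (n - k - l) * (a k * b l)) with hW
  -- Step 1 : expand the LHS
  have hpoint : ∀ i ∈ range (n + 1),
      ((n + 1).choose (i + 1) : R) * y ^ (n + 1 - (i + 1)) * b (i + 1)
        = ((n + 1).choose (i + 1) : R) * y ^ (n - i) * a (i + 1)
          + x * ∑ j ∈ range (i + 1),
              ((n + 1).choose (i + 1) : R) * y ^ (n - i) * (a (i - j) * b j) := by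
    intro i hi
    have h1 : n + 1 - (i + 1) = n - i := by omega
    have h2 : ∀ j, i + 1 - 1 - j = i - j := fun j => by omega
    rw [h1, hbn (i + 1) (by omega)]
    simp only [h2]
    rw [mul_add]
    congr 1
    rw [mul_left_comm, Finset.mul_sum]
  have hLHS : ∑ i ∈ Finset.range (n + 2), ((n + 1).choose i : R) * y ^ (n + 1 - i) * b i
      = (∑ i ∈ range (n + 1), ((n + 1).choose (i + 1) : R) * y ^ (n - i) * a (i + 1)
          + y ^ (n + 1) * a 0)
        + x * ∑ i ∈ range (n + 1), ∑ j ∈ range (i + 1),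
            ((n + 1).choose (i + 1) : R) * y ^ (n - i) * (a (i - j) * b j) := by
    rw [Finset.sum_range_succ', Finset.sum_congr rfl hpoint, Finset.sum_add_distrib,
      ← Finset.mul_sum]
    simp only [Nat.choose_zero_right, Nat.cast_one, one_mul, Nat.sub_zero, hb0]
    ring
  -- Step 2 : expand c (n+1)
  have hcn : c (n + 1)
      = ∑ i ∈ range (n + 1), ((n + 1).choose (i + 1) : R) * y ^ (n - i) * a (i + 1)
          + y ^ (n + 1) * a 0 := by
    rw [hc (n + 1), Finset.sum_range_succ']
    simp only [Nat.choose_zero_right, Nat.cast_one, one_mul, Nat.sub_zero]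
    congr 1
    refine Finset.sum_congr rfl fun i hi => ?_
    have : n + 1 - (i + 1) = n - i := by omega
    rw [this]
  -- Step 3 : the S sum equals W
  have hS : (∑ i ∈ range (n + 1), ∑ j ∈ range (i + 1),
        ((n + 1).choose (i + 1) : R) * y ^ (n - i) * (a (i - j) * b j)) = W := by
    rw [tri (n + 1) (fun i j => ((n + 1).choose (i + 1) : R) * y ^ (n - i) * (a (i - j) * b j))]
    rw [hW, Finset.sum_comm]
    refine Finset.sum_congr rfl fun l hl => ?_
    rw [mem_range] at hl
    have hsub : range (n + 1 - l) ⊆ range (n + 1) := by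
      apply Finset.range_subset_range.2; omega
    rw [← Finset.sum_subset hsub (fun k hk hk' => ?_)]
    · refine Finset.sum_congr rfl fun k hk => ?_
      rw [mem_range] at hk
      have e1 : k + l - l = k := by omega
      have e2 : n - (k + l) = n - k - l := by omega
      rw [e1, e2, mul_assoc]
    · rw [mem_range] at hk hk'
      have : n + 1 < k + l + 1 := by omega
      rw [Nat.choose_eq_zero_of_lt this]
      simp
  -- Step 4 : the T sum equals W
  have hT : (∑ j ∈ range (n + 1),
        c (n - j) * ∑ i ∈ range (j + 1), (j.choose i : R) * y ^ (j - i) * b i) = W := by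
    have hTj : ∀ j ∈ range (n + 1),
        c (n - j) * ∑ i ∈ range (j + 1), (j.choose i : R) * y ^ (j - i) * b i
          = ∑ k ∈ range (n + 1), ∑ l ∈ range (n + 1),
              ((n - j).choose k : R) * (j.choose l : R) * (y ^ (n - k - l) * (a k * b l)) := by
      intro j hj
      rw [mem_range] at hj
      rw [hc (n - j), Finset.sum_mul_sum]
      have hsubk : range (n - j + 1) ⊆ range (n + 1) := by
        apply Finset.range_subset_range.2; omega
      rw [← Finset.sum_subset hsubk (fun k hk hk' => ?_)]
      · refine Finset.sum_congr rfl fun k hk => ?_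
        rw [mem_range] at hk
        have hsubl : range (j + 1) ⊆ range (n + 1) := by
          apply Finset.range_subset_range.2; omega
        rw [← Finset.sum_subset hsubl (fun l hl hl' => ?_)]
        · refine Finset.sum_congr rfl fun l hl => ?_
          rw [mem_range] at hl
          have hy : y ^ (n - j - k) * y ^ (j - l) = y ^ (n - k - l) := by
            rw [← pow_add]
            congr 1
            omega
          calc ((n - j).choose k : R) * y ^ (n - j - k) * a k
                * ((j.choose l : R) * y ^ (j - l) * b l)
              = ((n - j).choose k : R) * (j.choose l : R)
                  * ((y ^ (n - j - k) * y ^ (j - l)) * (a k * b l)) := by ring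
            _ = _ := by rw [hy]
        · rw [mem_range] at hl hl'
          have : j < l := by omega
          rw [Nat.choose_eq_zero_of_lt this]
          simp
      · rw [mem_range] at hk hk'
        have : n - j < k := by omega
        rw [Nat.choose_eq_zero_of_lt this]
        simp [Finset.sum_eq_zero_iff]
    rw [Finset.sum_congr rfl hTj, Finset.sum_comm, hW]
    refine Finset.sum_congr rfl fun k hk => ?_
    rw [Finset.sum_comm]
    refine Finset.sum_congr rfl fun l hl => ?_
    rw [← Finset.sum_mul]
    congr 1
    have hv := vand l n k
    have : (∑ j ∈ range (n + 1), ((n - j).choose k : R) * (j.choose l : R))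
        = (((n + 1).choose (k + l + 1) : ℕ) : R) := by
      rw [← hv]
      push_cast
      refine Finset.sum_congr rfl fun j hj => by ring
    exact this
  rw [hLHS, hcn, hS, hT]

theorem stmt7 {R : Type*} [CommRing R] (x y : R) (a b c d : ℕ → R)
    (hb0 : b 0 = a 0)
    (hbn : ∀ n, 1 ≤ n → b n = a n + x * ∑ j ∈ Finset.range n, a (n - 1 - j) * b j)
    (hc : ∀ n, c n = ∑ i ∈ Finset.range (n + 1), (n.choose i : R) * y ^ (n - i) * a i)
    (hd0 : d 0 = c 0)
    (hdn : ∀ n, 1 ≤ n → d n = c n + x * ∑ j ∈ Finset.range n, c (n - 1 - j) * d j) :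
    ∀ n, d n = ∑ i ∈ Finset.range (n + 1), (n.choose i : R) * y ^ (n - i) * b i := by
  intro n
  induction n using Nat.strong_induction_on with
  | _ n ih =>
    obtain _ | m := n
    · simp [hd0, hc 0, hb0]
    · rw [hdn (m + 1) (by omega)]
      have hsub : ∀ j : ℕ, m + 1 - 1 - j = m - j := fun j => by omega
      simp only [hsub]
      have hrep : ∀ j ∈ Finset.range (m + 1), c (m - j) * d j
          = c (m - j) * ∑ i ∈ Finset.range (j + 1), (j.choose i : R) * y ^ (j - i) * b i := by
        intro j hj
        rw [Finset.mem_range] at hj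
        rw [ih j (by omega)]
      rw [Finset.sum_congr rfl hrep]
      exact (keylem x y a b c hb0 hbn hc m).symm
end

section
/- Let W be a sequence in a field with W_0 = s_0, W_1 = s_1 and W_{n+2} = h W_{n+1} − k W_n, and let C_n = ∑_{i=0}^n C(n,i) (−h/2)^{n−i} W_i. Then C satisfies C_{n+2} = (Δ/4) C_n where Δ = h^2 − 4k; moreover C_0 = s_0, C_1 = δ/2 with δ = 2s_1 − s_0 h, and for n ≥ 2, C_n = (Δ^{⌊n/2⌋}/2^n)·δ^{n mod 2}·s_0^{1 − n mod 2}. -/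
lemma pascal_step {F : Type*} [Field F] (x : F) (V : ℕ → F) (n : ℕ) :
    ∑ i ∈ Finset.range (n + 2), ((n + 1).choose i : F) * x ^ (n + 1 - i) * V i
      = ∑ i ∈ Finset.range (n + 1), (n.choose i : F) * x ^ (n - i) * (x * V i + V (i + 1)) := by
  rw [Finset.sum_range_succ' _ (n + 1)]
  simp only [Nat.choose_succ_succ, Nat.cast_add, Nat.succ_sub_succ, Nat.choose_zero_right,
    Nat.cast_one, one_mul, Nat.sub_zero, add_mul]
  rw [Finset.sum_add_distrib]
  have hRHS : ∑ i ∈ Finset.range (n + 1), (n.choose i : F) * x ^ (n - i) * (x * V i + V (i + 1))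
      = (∑ i ∈ Finset.range (n + 1), (n.choose i : F) * x ^ (n - i) * (x * V i))
        + ∑ i ∈ Finset.range (n + 1), (n.choose i : F) * x ^ (n - i) * V (i + 1) := by
    rw [← Finset.sum_add_distrib]; exact Finset.sum_congr rfl fun i _ => by ring
  rw [hRHS]
  have h1 : ∑ i ∈ Finset.range (n + 1), (n.choose i : F) * x ^ (n - i) * (x * V i)
      = (∑ i ∈ Finset.range n, ((n.choose (i + 1) : F)) * x ^ (n - i) * V (i + 1))
        + x ^ (n + 1) * V 0 := by
    rw [Finset.sum_range_succ' _ n]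
    congr 1
    · apply Finset.sum_congr rfl
      intro i hi
      rw [Finset.mem_range] at hi
      have : n - (i + 1) + 1 = n - i := by omega
      rw [← this, pow_succ]
      ring
    · simp [pow_succ]; ring
  have h2 : ∑ i ∈ Finset.range (n + 1), (n.choose (i + 1) : F) * x ^ (n - i) * V (i + 1)
      = ∑ i ∈ Finset.range n, (n.choose (i + 1) : F) * x ^ (n - i) * V (i + 1) := by
    rw [Finset.sum_range_succ]
    simp
  rw [h1, h2]
  ring

theorem stmt9 {F : Type*} [Field F] (h2 : (2 : F) ≠ 0) (h k s0 s1 : F)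
    (W : ℕ → F) (hW0 : W 0 = s0) (hW1 : W 1 = s1)
    (hWrec : ∀ n, W (n + 2) = h * W (n + 1) - k * W n)
    (C : ℕ → F)
    (hC : ∀ n, C n = ∑ i ∈ Finset.range (n + 1),
      (n.choose i : F) * (-h / 2) ^ (n - i) * W i) :
    (∀ n, C (n + 2) = (h ^ 2 - 4 * k) / 4 * C n) ∧
    C 0 = s0 ∧ C 1 = (2 * s1 - s0 * h) / 2 ∧
    ∀ n, 2 ≤ n → C n = (h ^ 2 - 4 * k) ^ (n / 2) / 2 ^ n *
      (2 * s1 - s0 * h) ^ (n % 2) * s0 ^ (1 - n % 2) := by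
  have h4 : (4 : F) ≠ 0 := by
    have : (4 : F) = 2 * 2 := by norm_num
    rw [this]; exact mul_ne_zero h2 h2
  have key : ∀ n, C (n + 2) = (h ^ 2 - 4 * k) / 4 * C n := by
    intro n
    rw [hC (n + 2), hC n]
    have e1 := pascal_step (-h / 2) W (n + 1)
    have e2 := pascal_step (-h / 2) (fun i => -h / 2 * W i + W (i + 1)) n
    calc ∑ i ∈ Finset.range (n + 2 + 1), ((n + 2).choose i : F) * (-h / 2) ^ (n + 2 - i) * W i
        = ∑ i ∈ Finset.range (n + 2), ((n + 1).choose i : F) * (-h / 2) ^ (n + 1 - i)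
            * (-h / 2 * W i + W (i + 1)) := e1
      _ = ∑ i ∈ Finset.range (n + 1), (n.choose i : F) * (-h / 2) ^ (n - i)
            * (-h / 2 * (-h / 2 * W i + W (i + 1)) + (-h / 2 * W (i + 1) + W (i + 1 + 1))) := e2
      _ = ∑ i ∈ Finset.range (n + 1), (h ^ 2 - 4 * k) / 4
            * ((n.choose i : F) * (-h / 2) ^ (n - i) * W i) := by
          apply Finset.sum_congr rfl
          intro i _
          have : (-h / 2 * (-h / 2 * W i + W (i + 1)) + (-h / 2 * W (i + 1) + W (i + 1 + 1)))
              = (h ^ 2 - 4 * k) / 4 * W i := by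
            rw [hWrec i]
            field_simp
            ring
          rw [this]; ring
      _ = (h ^ 2 - 4 * k) / 4 * ∑ i ∈ Finset.range (n + 1),
            (n.choose i : F) * (-h / 2) ^ (n - i) * W i := by rw [Finset.mul_sum]
  have hC0 : C 0 = s0 := by rw [hC]; simp [hW0]
  have hC1 : C 1 = (2 * s1 - s0 * h) / 2 := by
    rw [hC]
    rw [Finset.sum_range_succ, Finset.sum_range_one]
    simp only [Nat.choose_self, Nat.choose_zero_right, Nat.cast_one, hW0, hW1]
    field_simp
    linear_combination (-(h * s0)) * inv_mul_cancel₀ h2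
  refine ⟨key, hC0, hC1, ?_⟩
  have main : ∀ m, C (m + 2) = (h ^ 2 - 4 * k) ^ ((m + 2) / 2) / 2 ^ (m + 2) *
      (2 * s1 - s0 * h) ^ ((m + 2) % 2) * s0 ^ (1 - (m + 2) % 2) ∧
      C (m + 3) = (h ^ 2 - 4 * k) ^ ((m + 3) / 2) / 2 ^ (m + 3) *
      (2 * s1 - s0 * h) ^ ((m + 3) % 2) * s0 ^ (1 - (m + 3) % 2) := by
    intro m
    induction m with
    | zero =>
      have h8 : (8 : F) ≠ 0 := by
        have : (8 : F) = 2 * 4 := by norm_num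
        rw [this]; exact mul_ne_zero h2 h4
      constructor
      · rw [key 0, hC0]
        norm_num
      · rw [key 1, hC1]
        norm_num
        field_simp
        ring
    | succ m ih =>
      refine ⟨ih.2, ?_⟩
      have e : m + 1 + 3 = (m + 2) + 2 := by ring
      rw [e, key (m + 2), ih.1]
      have hdiv : (m + 2 + 2) / 2 = (m + 2) / 2 + 1 := by omega
      have hmod : (m + 2 + 2) % 2 = (m + 2) % 2 := by omega
      rw [hdiv, hmod, pow_succ]
      have hpow : (2 : F) ^ (m + 2 + 2) = 2 ^ (m + 2) * 4 := by
        rw [pow_add]; norm_num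
      rw [hpow]
      have h2p : (2 : F) ^ (m + 2) ≠ 0 := pow_ne_zero _ h2
      field_simp
      ring
  intro n hn
  obtain ⟨m, rfl⟩ : ∃ m, n = m + 2 := ⟨n - 2, by omega⟩
  exact (main m).1
end

section
/- The Invert transform (with parameter 1) of the shifted Fibonacci sequence is the Tribonacci sequence: if b is the unique sequence with b = ρ(F) + ρ(ρ(F))∗b (where ρ(F) = (0, F_0, F_1, F_2, …)), then b_n = T_n for all n, where T is the Tribonacci sequence with T_0 = T_1 = 0, T_2 = 1, T_{n+3} = T_{n+2} + T_{n+1} + T_n. -/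
theorem stmt10 (b T : ℕ → ℤ)
    (hb : ∀ n, b n = (Nat.fib (n - 1) : ℤ) +
      ∑ j ∈ Finset.range (n + 1), (Nat.fib (n - j - 2) : ℤ) * b j)
    (hT0 : T 0 = 0) (hT1 : T 1 = 0) (hT2 : T 2 = 1)
    (hTrec : ∀ n, T (n + 3) = T (n + 2) + T (n + 1) + T n) :
    ∀ n, b n = T n := by
  have hb0 : b 0 = 0 := by have := hb 0; simpa using this
  have hb1 : b 1 = 0 := by
    have := hb 1
    simp [Finset.sum_range_succ] at this
    simpa using this
  have hb2 : b 2 = 1 := by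
    have := hb 2
    simp [Finset.sum_range_succ] at this
    simpa using this
  have hbrec : ∀ n, b (n + 3) = b (n + 2) + b (n + 1) + b n := by
    intro n
    have h3 : b (n + 3) = (Nat.fib (n + 2) : ℤ) +
        (∑ j ∈ Finset.range n, (Nat.fib (n + 1 - j) : ℤ) * b j + b n) := by
      rw [hb (n + 3)]
      congr 1
      rw [show n + 3 + 1 = n + 4 from rfl]
      rw [Finset.sum_range_succ, Finset.sum_range_succ, Finset.sum_range_succ,
        Finset.sum_range_succ]
      have e1 : n + 3 - (n + 3) - 2 = 0 := by omega
      have e2 : n + 3 - (n + 2) - 2 = 0 := by omega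
      have e3 : n + 3 - (n + 1) - 2 = 0 := by omega
      have e4 : n + 3 - n - 2 = 1 := by omega
      rw [e1, e2, e3, e4]
      simp only [Nat.fib_zero, Nat.fib_one, Nat.cast_zero, Nat.cast_one,
        zero_mul, add_zero, one_mul]
      congr 1
      apply Finset.sum_congr rfl
      intro j hj
      have : n + 3 - j - 2 = n + 1 - j := by omega
      rw [this]
    have h2 : b (n + 2) = (Nat.fib (n + 1) : ℤ) +
        ∑ j ∈ Finset.range n, (Nat.fib (n - j) : ℤ) * b j := by
      rw [hb (n + 2)]
      congr 1
      rw [show n + 2 + 1 = n + 3 from rfl]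
      rw [Finset.sum_range_succ, Finset.sum_range_succ, Finset.sum_range_succ]
      have e1 : n + 2 - (n + 2) - 2 = 0 := by omega
      have e2 : n + 2 - (n + 1) - 2 = 0 := by omega
      have e3 : n + 2 - n - 2 = 0 := by omega
      rw [e1, e2, e3]
      simp only [Nat.fib_zero, Nat.cast_zero, zero_mul, add_zero]
      apply Finset.sum_congr rfl
      intro j hj
      have : n + 2 - j - 2 = n - j := by omega
      rw [this]
    have h1 : b (n + 1) = (Nat.fib n : ℤ) +
        ∑ j ∈ Finset.range n, (Nat.fib (n - 1 - j) : ℤ) * b j := by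
      rw [hb (n + 1)]
      congr 1
      rw [show n + 1 + 1 = n + 2 from rfl]
      rw [Finset.sum_range_succ, Finset.sum_range_succ]
      have e1 : n + 1 - (n + 1) - 2 = 0 := by omega
      have e2 : n + 1 - n - 2 = 0 := by omega
      rw [e1, e2]
      simp only [Nat.fib_zero, Nat.cast_zero, zero_mul, add_zero]
      apply Finset.sum_congr rfl
      intro j hj
      have : n + 1 - j - 2 = n - 1 - j := by omega
      rw [this]
    rw [h1, h2, h3]
    have hfib : (Nat.fib (n + 2) : ℤ) = Nat.fib (n + 1) + Nat.fib n := by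
      rw [Nat.fib_add_two]; push_cast; ring
    have hsum : ∑ j ∈ Finset.range n, (Nat.fib (n + 1 - j) : ℤ) * b j =
        ∑ j ∈ Finset.range n, (Nat.fib (n - j) : ℤ) * b j +
        ∑ j ∈ Finset.range n, (Nat.fib (n - 1 - j) : ℤ) * b j := by
      rw [← Finset.sum_add_distrib]
      apply Finset.sum_congr rfl
      intro j hj
      have hjn : j < n := Finset.mem_range.mp hj
      have e1 : n + 1 - j = (n - 1 - j) + 2 := by omega
      have e2 : n - j = (n - 1 - j) + 1 := by omega
      rw [e1, e2, Nat.fib_add_two]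
      push_cast
      ring
    rw [hfib, hsum]
    ring
  have key : ∀ n, b n = T n ∧ b (n + 1) = T (n + 1) ∧ b (n + 2) = T (n + 2) := by
    intro n
    induction n with
    | zero => exact ⟨by rw [hb0, hT0], by rw [hb1, hT1], by rw [hb2, hT2]⟩
    | succ k ih =>
      obtain ⟨h0, h1, h2⟩ := ih
      refine ⟨h1, h2, ?_⟩
      rw [show k + 1 + 2 = k + 3 from rfl, hbrec k, hTrec k, h0, h1, h2]
  exact fun n => (key n).1
end

section
/- Generating-function identity for r-bonacci sequences: if A_r(t) = ∑_{n≥0} F^{(r)}_n t^n is the ordinary generating function of the r-bonacci sequence, then A_{r+1}(t) = t A_r(t) / (1 − t·(t A_r(t))). -/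
open PowerSeries Finset

private lemma key_gf (t : ℕ) (H : ℕ → ℤ) (h0 : ∀ i, i < t → H i = 0) (h1 : H t = 1)
    (hrec : ∀ n, H (n + (t + 1)) = ∑ j ∈ Finset.range (t + 1), H (n + t - j)) :
    PowerSeries.mk H * (1 - ∑ j ∈ Finset.range (t + 1), (PowerSeries.X : ℤ⟦X⟧) ^ (j + 1))
      = PowerSeries.X ^ t := by
  ext n
  rw [mul_sub, mul_one, Finset.mul_sum, map_sub, map_sum, PowerSeries.coeff_mk,
    PowerSeries.coeff_X_pow]
  simp only [PowerSeries.coeff_mul_X_pow', PowerSeries.coeff_mk]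
  rcases lt_trichotomy n t with h | h | h
  · rw [if_neg (by omega), h0 n h, Finset.sum_eq_zero, sub_zero]
    intro j hj
    split_ifs with hc
    · exact h0 _ (by omega)
    · rfl
  · subst h
    rw [if_pos rfl, h1, Finset.sum_eq_zero, sub_zero]
    intro j hj
    split_ifs with hc
    · exact h0 _ (by omega)
    · rfl
  · obtain ⟨m, rfl⟩ : ∃ m, n = m + (t + 1) := ⟨n - (t + 1), by omega⟩
    rw [if_neg (by omega), hrec m, sub_eq_zero]
    apply Finset.sum_congr rfl
    intro j hj
    simp only [Finset.mem_range] at hj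
    rw [if_pos (by omega)]
    congr 1
    omega

theorem stmt12 (r : ℕ) (hr : 1 ≤ r) (F G : ℕ → ℤ)
    (hF0 : ∀ i, i < r - 1 → F i = 0) (hF1 : F (r - 1) = 1)
    (hFrec : ∀ n, F (n + r) = ∑ j ∈ Finset.range r, F (n + r - 1 - j))
    (hG0 : ∀ i, i < r → G i = 0) (hG1 : G r = 1)
    (hGrec : ∀ n, G (n + (r + 1)) = ∑ j ∈ Finset.range (r + 1), G (n + r - j)) :
    PowerSeries.mk G * (1 - PowerSeries.X * (PowerSeries.X * PowerSeries.mk F))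
      = PowerSeries.X * PowerSeries.mk F := by
  obtain ⟨t, rfl⟩ : ∃ t, r = t + 1 := ⟨r - 1, by omega⟩
  set D : ℤ⟦X⟧ := 1 - ∑ j ∈ Finset.range (t + 1), (PowerSeries.X : ℤ⟦X⟧) ^ (j + 1) with hDdef
  set D' : ℤ⟦X⟧ := 1 - ∑ j ∈ Finset.range (t + 2), (PowerSeries.X : ℤ⟦X⟧) ^ (j + 1) with hD'def
  have hF' : PowerSeries.mk F * D = PowerSeries.X ^ t := by
    apply key_gf t F (fun i hi => hF0 i (by omega)) (by simpa using hF1)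
    intro n
    rw [hFrec n]
    apply Finset.sum_congr rfl
    intro j hj
    have : n + (t + 1) - 1 - j = n + t - j := by omega
    rw [this]
  have hG' : PowerSeries.mk G * D' = PowerSeries.X ^ (t + 1) := by
    apply key_gf (t + 1) G hG0 hG1
    intro n
    exact hGrec n
  have hDD' : D' = D - PowerSeries.X ^ (t + 2) := by
    rw [hDdef, hD'def, Finset.sum_range_succ]
    ring
  have hD : D ≠ 0 := by
    intro h
    have : PowerSeries.constantCoeff (R := ℤ) D = 1 := by
      rw [hDdef]
      simp [PowerSeries.constantCoeff_X]
    rw [h] at this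
    simp at this
  apply mul_right_cancel₀ hD
  calc PowerSeries.mk G * (1 - PowerSeries.X * (PowerSeries.X * PowerSeries.mk F)) * D
      = PowerSeries.mk G * (D - PowerSeries.X ^ 2 * (PowerSeries.mk F * D)) := by ring
    _ = PowerSeries.mk G * (D - PowerSeries.X ^ 2 * PowerSeries.X ^ t) := by rw [hF']
    _ = PowerSeries.mk G * D' := by rw [hDD']; ring
    _ = PowerSeries.X ^ (t + 1) := hG'
    _ = PowerSeries.X * PowerSeries.mk F * D := by rw [mul_assoc, hF']; ring
end

section
/- For every sequence satisfying a second-order linear recurrence with characteristic polynomial t^2 − (α+β)t + αβ over a field, with initial conditions a_0 = 0, a_1 = 1, one has a_n = ∑_{i=1}^n C(n,i) α^{n−i} (β−α)^{i−1} for all n ≥ 1. -/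
open Finset

theorem stmt14 {F : Type*} [Field F] (α β : F) (a : ℕ → F)
    (ha0 : a 0 = 0) (ha1 : a 1 = 1)
    (harec : ∀ n, a (n + 2) = (α + β) * a (n + 1) - α * β * a n) :
    ∀ n, 1 ≤ n →
      a n = ∑ i ∈ Finset.Icc 1 n, (n.choose i : F) * α ^ (n - i) * (β - α) ^ (i - 1) := by
  set b : ℕ → F := fun n => ∑ j ∈ range n, (n.choose (j+1) : F) * α ^ (n-1-j) * (β-α)^j with hb
  have hIcc : ∀ n, ∑ i ∈ Icc 1 n, (n.choose i : F) * α ^ (n - i) * (β - α) ^ (i - 1) = b n := by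
    intro n
    rw [hb, show Icc 1 n = Ico 1 (n+1) from rfl, Finset.sum_Ico_eq_sum_range]
    simp only [Nat.add_sub_cancel]
    apply Finset.sum_congr rfl
    intro j hj
    rw [show 1 + j = j + 1 from by omega]
    rw [show n - (j + 1) = n - 1 - j from by omega, show j + 1 - 1 = j from by omega]
  have key : ∀ n, a (n+1) = α * a n + β ^ n := by
    intro n
    induction n with
    | zero => simp [ha1, ha0]
    | succ n ih => rw [harec, ih]; ring
  have bstep : ∀ n, b (n+1) = α * b n + β ^ n := by
    intro n
    have h1 : b (n+1) = ∑ j ∈ range (n+1),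
        ((n.choose j : F) + n.choose (j+1)) * α ^ (n-j) * (β-α)^j := by
      rw [hb]
      apply Finset.sum_congr rfl
      intro j hj
      rw [Nat.choose_succ_succ]
      push_cast [Nat.succ_eq_add_one]
      rfl
    have h2 : ∀ j ∈ range (n+1), ((n.choose j : F) + n.choose (j+1)) * α ^ (n-j) * (β-α)^j
        = (n.choose j : F) * α ^ (n-j) * (β-α)^j + (n.choose (j+1) : F) * α ^ (n-j) * (β-α)^j := by
      intros; ring
    have h3 : ∑ j ∈ range (n+1), (n.choose j : F) * α ^ (n-j) * (β-α)^j = β ^ n := by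
      have hβ : (β : F) ^ n = ((β - α) + α) ^ n := by ring_nf
      rw [hβ, add_pow]
      apply Finset.sum_congr rfl
      intro j hj
      ring
    have h4 : ∑ j ∈ range (n+1), (n.choose (j+1) : F) * α ^ (n-j) * (β-α)^j = α * b n := by
      rw [Finset.sum_range_succ, Nat.choose_succ_self]
      simp only [Nat.cast_zero, zero_mul, add_zero]
      rw [hb, Finset.mul_sum]
      apply Finset.sum_congr rfl
      intro j hj
      have hj' : j < n := Finset.mem_range.mp hj
      have : n - j = (n - 1 - j) + 1 := by omega
      rw [this, pow_succ]
      ring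
    rw [h1, Finset.sum_congr rfl h2, Finset.sum_add_distrib, h3, h4]
    ring
  have hab : ∀ n, a n = b n := by
    intro n
    induction n with
    | zero => simp [ha0, hb]
    | succ n ih => rw [key, ih, bstep]
  intro n _
  rw [hIcc, hab]
end

section
/- If b = I(a) is the Invert transform (parameter 1) of a sequence a, then b_n = B_{n+1}(a_0, a_1, …, a_n), where B_m denotes the complete ordinary Bell polynomial evaluated at the shifted arguments t_i = a_{i-1}: explicitly, b_n = ∑_{k=1}^{n+1} ∑_{i_1+⋯+i_k = n+1, i_j ≥ 1} a_{i_1−1} a_{i_2−1} ⋯ a_{i_k−1}, the sum over all ordered compositions of n+1. -/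
private lemma coeffA_vanish {R : Type*} [CommRing R] (a : ℕ → R) {m k : ℕ} (h : m < k) :
    PowerSeries.coeff (R := R) m ((PowerSeries.X * PowerSeries.mk a) ^ k) = 0 := by
  have hd : (PowerSeries.X : PowerSeries R) ^ k ∣ (PowerSeries.X * PowerSeries.mk a) ^ k :=
    pow_dvd_pow_of_dvd ⟨PowerSeries.mk a, rfl⟩ k
  exact (PowerSeries.X_pow_dvd_iff.mp hd) m h

theorem stmt17 {R : Type*} [CommRing R] (a b : ℕ → R)
    (hb0 : b 0 = a 0)
    (hbn : ∀ n, 1 ≤ n → b n = a n + ∑ j ∈ Finset.range n, a (n - 1 - j) * b j) :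
    ∀ n, b n = ∑ k ∈ Finset.Icc 1 (n + 1),
      PowerSeries.coeff (R := R) (n + 1) ((PowerSeries.X * PowerSeries.mk a) ^ k) := by
  set A := PowerSeries.X * PowerSeries.mk a with hA
  -- S m = sum over k in Icc 1 m of coeff m (A^k)
  set S : ℕ → R := fun m => ∑ k ∈ Finset.Icc 1 m, PowerSeries.coeff (R := R) m (A ^ k) with hS
  -- truncation
  have htrunc : ∀ m N, m ≤ N → ∑ k ∈ Finset.Icc 1 N, PowerSeries.coeff (R := R) m (A ^ k) = S m := by
    intro m N hmN
    rw [hS]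
    exact (Finset.sum_subset (Finset.Icc_subset_Icc_right hmN)
      (fun k hk hk' => coeffA_vanish a (by
        simp only [Finset.mem_Icc] at hk hk'
        omega))).symm
  suffices h : ∀ n, b n = S (n + 1) by
    intro n; rw [h n, hS]
  intro n
  induction n using Nat.strong_induction_on with
  | _ n ih =>
    match n with
    | 0 =>
      rw [hb0, hS]
      simp [hA, pow_one, PowerSeries.coeff_succ_X_mul]
    | Nat.succ m =>
      set n := m + 1 with hn
      rw [hbn n (by omega)]
      have hb' : ∑ j ∈ Finset.range n, a (n - 1 - j) * b j
          = ∑ j ∈ Finset.range n, a (n - 1 - j) * S (j + 1) := by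
        apply Finset.sum_congr rfl
        intro j hj
        rw [ih j (Finset.mem_range.mp hj)]
      rw [hb']
      -- now prove S (n+1) = a n + ∑ j in range n, a (n-1-j) * S (j+1)
      have h1 : Finset.Icc 1 (n + 1) = insert 1 (Finset.Icc 2 (n + 1)) := by
        ext x
        simp only [Finset.mem_Icc, Finset.mem_insert]
        omega
      rw [hS]
      simp only
      rw [h1, Finset.sum_insert (by simp [Finset.mem_Icc])]
      have hk1 : PowerSeries.coeff (R := R) (n + 1) (A ^ 1) = a n := by
        rw [pow_one, hA, PowerSeries.coeff_succ_X_mul, PowerSeries.coeff_mk]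
      rw [hk1]
      congr 1
      -- reindex k = k' + 1 over Icc 1 n
      have h2 : ∑ k ∈ Finset.Icc 2 (n + 1), PowerSeries.coeff (R := R) (n + 1) (A ^ k)
          = ∑ k ∈ Finset.Icc 1 n, PowerSeries.coeff (R := R) (n + 1) (A ^ (k + 1)) := by
        rw [← Finset.map_add_right_Icc 1 n 1, Finset.sum_map]
        simp [addRightEmbedding]
      rw [h2]
      have h3 : ∀ k, PowerSeries.coeff (R := R) (n + 1) (A ^ (k + 1))
          = ∑ p ∈ Finset.range (n + 1), a p * PowerSeries.coeff (R := R) (n - p) (A ^ k) := by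
        intro k
        have : A ^ (k + 1) = PowerSeries.X * (PowerSeries.mk a * A ^ k) := by
          rw [pow_succ']; ring
        rw [this, PowerSeries.coeff_succ_X_mul, PowerSeries.coeff_mul,
          Finset.Nat.sum_antidiagonal_eq_sum_range_succ_mk]
        simp [PowerSeries.coeff_mk]
      simp only [h3]
      rw [Finset.sum_comm]
      -- now: ∑ p in range (n+1), ∑ k in Icc 1 n, a p * coeff (n-p) A^k
      --    = ∑ j in range n, a (n-1-j) * S (j+1)
      have h4 : ∀ p, p < n + 1 → ∑ k ∈ Finset.Icc 1 n, a p * PowerSeries.coeff (R := R) (n - p) (A ^ k)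
          = a p * S (n - p) := by
        intro p hp
        rw [← Finset.mul_sum, htrunc (n - p) n (by omega)]
      rw [Finset.sum_congr rfl (fun p hp => h4 p (Finset.mem_range.mp hp))]
      -- split off p = n: S 0 = 0
      conv_rhs => rw [Finset.sum_range_succ]
      have hS0 : S (n - n) = 0 := by simp [hS]
      rw [hS0, mul_zero, add_zero]
      -- reindex
      rw [← Finset.sum_range_reflect (fun p => a p * S (n - p)) n]
      apply Finset.sum_congr rfl
      intro j hj
      have hj' := Finset.mem_range.mp hj
      have he : n - 1 - (n - 1 - j) = j := by omega
      have he2 : n - (n - 1 - j) = j + 1 := by omega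
      simp only [he, he2, hS]
end
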